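/- Suppose for each pair (i,j) ∈ {1,…,β}² we have formal series f_{i,j}(u) = δ_{i,j} - Σ_{k≥0} b_{j,i,k} u^{-(k+1)}, and define Ǒ_{i,j}(u,v) = (uv/(u+v))·(δ_{i,j} - Σ_{r=1}^β f_{i,r}(u) f_{j,r}(v)). Then Ǒ_{i,j}(u,v) is a formal power series in u^{-1}, v^{-1} (no polar part at u+v=0 and no positive powers of u or v) if and only if the antisymmetry relation Σ_r f_{i,r}(u) f_{j,r}(-u) = δ_{i,j} holds as formal series in u^{-1}. -/

import Mathlib

private lemma neg_one_pow_sub_aux (a b : ℕ) (h : b < a) :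
    ((-1:ℂ))^(a-b) = -(-1:ℂ)^(a-1-b) := by
  have h1 : a - b = (a-1-b)+1 := by omega
  rw [h1, pow_succ]; ring

private lemma telescope_aux (A : ℕ → ℕ → ℂ) :
    (∃ Q : ℕ → ℕ → ℂ, ∀ k l : ℕ,
        A k l = (if k = 0 then 0 else Q (k - 1) l) + (if l = 0 then 0 else Q k (l - 1)))
    ↔ ∀ n : ℕ, ∑ k ∈ Finset.range (n + 1), (-1 : ℂ) ^ (n - k) * A k (n - k) = 0 := by
  constructor
  · rintro ⟨Q, hQ⟩ n
    have key : ∀ k ∈ Finset.range (n+1),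
        (-1:ℂ)^(n-k) * A k (n-k)
          = (-1:ℂ)^(n-k) * (if k = 0 then 0 else Q (k - 1) (n-k))
            + (-1:ℂ)^(n-k) * (if n - k = 0 then 0 else Q k (n - k - 1)) := by
      intro k _
      rw [hQ k (n-k)]; ring
    rw [Finset.sum_congr rfl key, Finset.sum_add_distrib]
    have hB : ∑ k ∈ Finset.range (n+1),
        (-1:ℂ)^(n-k) * (if k = 0 then 0 else Q (k - 1) (n-k))
        = ∑ k ∈ Finset.range n, (-1:ℂ)^(n-(k+1)) * Q k (n-(k+1)) := by
      rw [Finset.sum_range_succ']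
      simp
    have hC : ∑ k ∈ Finset.range (n+1),
        (-1:ℂ)^(n-k) * (if n - k = 0 then 0 else Q k (n - k - 1))
        = ∑ k ∈ Finset.range n, (-1:ℂ)^(n-k) * Q k (n-k-1) := by
      rw [Finset.sum_range_succ]
      have hlast : (-1:ℂ)^(n-n) * (if n - n = 0 then 0 else Q n (n-n-1)) = 0 := by simp
      rw [hlast, add_zero]
      refine Finset.sum_congr rfl fun k hk => ?_
      simp only [Finset.mem_range] at hk
      have : n - k ≠ 0 := by omega
      simp [this]
    rw [hB, hC, ← Finset.sum_add_distrib]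
    refine Finset.sum_eq_zero fun k hk => ?_
    simp only [Finset.mem_range] at hk
    have h3 : n - (k+1) = n - k - 1 := by omega
    have h4 : n - 1 - k = n - k - 1 := by omega
    rw [h3, neg_one_pow_sub_aux n k hk, h4]
    ring
  · intro h
    refine ⟨fun k l => ∑ m ∈ Finset.range (k+1), (-1:ℂ)^(k-m) * A m (k+l+1-m), ?_⟩
    intro k l
    rcases Nat.eq_zero_or_pos k with hk | hk <;> rcases Nat.eq_zero_or_pos l with hl | hl
    · subst hk; subst hl
      have h0 := h 0
      simpa using h0
    · subst hk
      have hl' : l ≠ 0 := by omega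
      simp only [if_neg hl', if_true, eq_self_iff_true, zero_add, Finset.sum_range_one,
        Nat.sub_zero, pow_zero, one_mul, Nat.zero_add]
      have h5 : l - 1 + 1 = l := by omega
      rw [h5]
    · subst hl
      have hk' : k ≠ 0 := by omega
      have hS := h k
      rw [Finset.sum_range_succ] at hS
      simp only [Nat.sub_self, pow_zero, one_mul] at hS
      simp only [if_neg hk', if_true, eq_self_iff_true, add_zero]
      have hrw : ∑ m ∈ Finset.range ((k-1)+1), (-1:ℂ)^((k-1)-m) * A m ((k-1)+0+1-m)
          = ∑ m ∈ Finset.range k, (-1:ℂ)^(k-1-m) * A m (k-m) := by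
        have h6 : (k-1)+1 = k := by omega
        rw [h6]
      rw [hrw]
      have hflip : ∑ m ∈ Finset.range k, (-1:ℂ)^(k-1-m) * A m (k-m)
          = -∑ m ∈ Finset.range k, (-1:ℂ)^(k-m) * A m (k-m) := by
        rw [← Finset.sum_neg_distrib]
        refine Finset.sum_congr rfl fun m hm => ?_
        simp only [Finset.mem_range] at hm
        rw [neg_one_pow_sub_aux k m hm]; ring
      rw [hflip]
      linear_combination hS
    · have hk' : k ≠ 0 := by omega
      have hl' : l ≠ 0 := by omega
      simp only [if_neg hk', if_neg hl']
      have h6 : (k-1)+1 = k := by omega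
      have hrw1 : ∑ m ∈ Finset.range ((k-1)+1), (-1:ℂ)^((k-1)-m) * A m ((k-1)+l+1-m)
          = ∑ m ∈ Finset.range k, (-1:ℂ)^(k-1-m) * A m (k+l-m) := by
        rw [h6]
        refine Finset.sum_congr rfl fun m hm => ?_
        simp only [Finset.mem_range] at hm
        have : (k-1)+l+1-m = k+l-m := by omega
        rw [this]
      have hrw2 : ∑ m ∈ Finset.range (k+1), (-1:ℂ)^(k-m) * A m (k+(l-1)+1-m)
          = (∑ m ∈ Finset.range k, (-1:ℂ)^(k-m) * A m (k+l-m)) + A k l := by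
        rw [Finset.sum_range_succ]
        have h7 : k+(l-1)+1-k = l := by omega
        rw [h7, Nat.sub_self, pow_zero, one_mul]
        congr 1
        refine Finset.sum_congr rfl fun m hm => ?_
        simp only [Finset.mem_range] at hm
        have : k+(l-1)+1-m = k+l-m := by omega
        rw [this]
      rw [hrw1, hrw2]
      have hflip : ∑ m ∈ Finset.range k, (-1:ℂ)^(k-1-m) * A m (k+l-m)
          = -∑ m ∈ Finset.range k, (-1:ℂ)^(k-m) * A m (k+l-m) := by
        rw [← Finset.sum_neg_distrib]
        refine Finset.sum_congr rfl fun m hm => ?_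
        simp only [Finset.mem_range] at hm
        rw [neg_one_pow_sub_aux k m hm]; ring
      rw [hflip]
      ring


/-- Lemma `lemmaBuv` structure: given formal series `f_{i,j}(u) = δ_{ij} - Σ_{k≥0} b u^{-k-1}`
with coefficient functions `c i j : ℕ → ℂ` (so `c i j 0 = δ_{ij}`), the kernel
`Ǒ_{i,j}(u,v) = (uv/(u+v))(δ_{ij} - Σ_r f_{i,r}(u) f_{j,r}(v))` is a genuine double power
series in `u⁻¹, v⁻¹` (no polar part at `u+v=0`: in the variables `s = u⁻¹, t = v⁻¹` the
numerator `δ_{ij} - Σ_r F_{i,r}(s)F_{j,r}(t)` is divisible by `s+t`, expressed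
coefficientwise via `Q`) if and only if `Σ_r f_{i,r}(u) f_{j,r}(-u) = δ_{ij}` as formal
series in `u⁻¹` (expressed coefficientwise on the right). -/
theorem kernel_regular_iff_unitarity (β : ℕ) (hβ : 1 ≤ β)
    (c : Fin β → Fin β → ℕ → ℂ)
    (hconst : ∀ i j : Fin β, c i j 0 = if i = j then 1 else 0) (i j : Fin β) :
    (∃ Q : ℕ → ℕ → ℂ, ∀ k l : ℕ,
        (if k = 0 ∧ l = 0 then (if i = j then (1 : ℂ) else 0) else 0)
            - ∑ r : Fin β, c i r k * c j r l
          = (if k = 0 then 0 else Q (k - 1) l) + (if l = 0 then 0 else Q k (l - 1)))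
      ↔ (∀ n : ℕ, (∑ k ∈ Finset.range (n + 1),
            (-1 : ℂ) ^ (n - k) * ∑ r : Fin β, c i r k * c j r (n - k))
          = if n = 0 then (if i = j then 1 else 0) else 0) := by
  have key := telescope_aux (fun k l =>
    (if k = 0 ∧ l = 0 then (if i = j then (1 : ℂ) else 0) else 0)
      - ∑ r : Fin β, c i r k * c j r l)
  rw [key]
  apply forall_congr'
  intro n
  have hsplit : ∑ k ∈ Finset.range (n+1),
      (-1:ℂ)^(n-k) * ((if k = 0 ∧ n - k = 0 then (if i = j then (1:ℂ) else 0) else 0)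
        - ∑ r : Fin β, c i r k * c j r (n-k))
      = (∑ k ∈ Finset.range (n+1),
          (-1:ℂ)^(n-k) * (if k = 0 ∧ n - k = 0 then (if i = j then (1:ℂ) else 0) else 0))
        - ∑ k ∈ Finset.range (n+1),
          (-1:ℂ)^(n-k) * ∑ r : Fin β, c i r k * c j r (n-k) := by
    rw [← Finset.sum_sub_distrib]
    exact Finset.sum_congr rfl fun k _ => by ring
  have hδsum : ∑ k ∈ Finset.range (n+1),
      (-1:ℂ)^(n-k) * (if k = 0 ∧ n - k = 0 then (if i = j then (1:ℂ) else 0) else 0)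
      = if n = 0 then (if i = j then (1:ℂ) else 0) else 0 := by
    by_cases hn : n = 0
    · subst hn; simp
    · rw [if_neg hn]
      refine Finset.sum_eq_zero fun k hk => ?_
      have : ¬(k = 0 ∧ n - k = 0) := by omega
      simp [this]
  rw [hsplit, hδsum, sub_eq_zero, eq_comm]
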